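/- Let Δx, Δy > 0, let K = [−Δx/2, Δx/2] × [−Δy/2, Δy/2] ⊂ ℝ², and let f : ℝ² → ℝ be three times continuously differentiable on a neighborhood of K with all third-order partial derivatives bounded in absolute value by M on K. Then the net flux of f through the horizontal edges of K approximates ΔxΔy ∂_y f(0,0) to the following accuracy: |∫_{−Δx/2}^{Δx/2} ( f(x, Δy/2) − f(x, −Δy/2) ) dx − ΔxΔy ∂_y f(0,0)| ≤ (M/24)(Δx Δy³ + Δx³ Δy). -/

import Mathlib

open MeasureTheory intervalIntegral

/-- Mean value inequality from 0 on `uIcc 0 b`. -/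
lemma my_mvt_abs {u du : ℝ → ℝ} {C b : ℝ}
    (h : ∀ t ∈ Set.uIcc (0:ℝ) b, HasDerivAt u (du t) t)
    (hC : ∀ t ∈ Set.uIcc (0:ℝ) b, |du t| ≤ C) :
    ∀ t ∈ Set.uIcc (0:ℝ) b, |u t - u 0| ≤ C * |t| := by
  intro t ht
  have h0 : (0:ℝ) ∈ Set.uIcc (0:ℝ) b := Set.left_mem_uIcc
  have := Convex.norm_image_sub_le_of_norm_hasDerivWithin_le
    (fun x hx => (h x hx).hasDerivWithinAt)
    (fun x hx => by simpa [Real.norm_eq_abs] using hC x hx)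
    (convex_uIcc (0:ℝ) b) h0 ht
  simpa [Real.norm_eq_abs] using this

/-- Comparison of interval integrals from 0 through absolute values. -/
lemma my_int_abs_le {v w : ℝ → ℝ} {b : ℝ}
    (hv : ContinuousOn v (Set.uIcc (0:ℝ) b))
    (hw : ContinuousOn w (Set.uIcc (0:ℝ) b))
    (h : ∀ t ∈ Set.uIcc (0:ℝ) b, |v t| ≤ w t) :
    |∫ t in (0:ℝ)..b, v t| ≤ |∫ t in (0:ℝ)..b, w t| := by
  rcases le_total 0 b with hb | hb
  · have h1 : |∫ t in (0:ℝ)..b, v t| ≤ ∫ t in (0:ℝ)..b, |v t| := by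
      simpa [Real.norm_eq_abs] using
        intervalIntegral.norm_integral_le_integral_norm (f := v) (a := (0:ℝ)) (b := b) hb
    have h2 : ∫ t in (0:ℝ)..b, |v t| ≤ ∫ t in (0:ℝ)..b, w t := by
      apply intervalIntegral.integral_mono_on hb
      · exact (hv.abs).intervalIntegrable
      · exact hw.intervalIntegrable
      · intro x hx
        exact h x (by rwa [Set.uIcc_of_le hb])
    exact (h1.trans h2).trans (le_abs_self _)
  · have hsymm : |∫ t in (0:ℝ)..b, v t| = |∫ t in b..(0:ℝ), v t| := by
      rw [intervalIntegral.integral_symm]; rw [abs_neg]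
    rw [hsymm]
    rw [Set.uIcc_comm] at hv hw
    have h1 : |∫ t in b..(0:ℝ), v t| ≤ ∫ t in b..(0:ℝ), |v t| := by
      simpa [Real.norm_eq_abs] using
        intervalIntegral.norm_integral_le_integral_norm (f := v) (a := b) (b := (0:ℝ)) hb
    have h2 : ∫ t in b..(0:ℝ), |v t| ≤ ∫ t in b..(0:ℝ), w t := by
      apply intervalIntegral.integral_mono_on hb
      · exact (hv.abs).intervalIntegrable
      · exact hw.intervalIntegrable
      · intro x hx
        exact h x (by rw [Set.uIcc_comm]; rwa [Set.uIcc_of_le hb])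
    have h3 : ∫ t in b..(0:ℝ), w t ≤ |∫ t in (0:ℝ)..b, w t| := by
      rw [intervalIntegral.integral_symm b (0:ℝ), abs_neg]
      exact le_abs_self _
    exact (h1.trans h2).trans h3

lemma my_integral_mul_abs (C b : ℝ) : ∫ t in (0:ℝ)..b, C * |t| = C * (b * |b|) / 2 := by
  rcases le_total 0 b with hb | hb
  · have heq : Set.EqOn (fun t => C * |t|) (fun t => C * t) (Set.uIcc (0:ℝ) b) := by
      intro t ht
      rw [Set.uIcc_of_le hb] at ht
      simp [abs_of_nonneg ht.1]
    rw [intervalIntegral.integral_congr heq, intervalIntegral.integral_const_mul, integral_id,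
      abs_of_nonneg hb]
    ring
  · have heq : Set.EqOn (fun t => C * |t|) (fun t => C * (-t)) (Set.uIcc (0:ℝ) b) := by
      intro t ht
      rw [Set.uIcc_of_ge hb] at ht
      simp [abs_of_nonpos ht.2]
    rw [intervalIntegral.integral_congr heq]
    have : ∫ t in (0:ℝ)..b, C * (-t) = (-C) * ((b^2 - 0^2)/2) := by
      rw [show (fun t : ℝ => C * (-t)) = (fun t : ℝ => (-C) * t) by funext t; ring,
        intervalIntegral.integral_const_mul, integral_id]
    rw [this, abs_of_nonpos hb]
    ring

/-- First-order Taylor bound from 0. -/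
lemma my_taylor1 {u du ddu : ℝ → ℝ} {b C : ℝ}
    (h1 : ∀ t ∈ Set.uIcc (0:ℝ) b, HasDerivAt u (du t) t)
    (h2 : ∀ t ∈ Set.uIcc (0:ℝ) b, HasDerivAt du (ddu t) t)
    (hB : ∀ t ∈ Set.uIcc (0:ℝ) b, |ddu t| ≤ C) :
    |u b - u 0 - b * du 0| ≤ C * b ^ 2 / 2 := by
  have hC0 : 0 ≤ C := le_trans (abs_nonneg _) (hB 0 Set.left_mem_uIcc)
  have hducont : ContinuousOn du (Set.uIcc (0:ℝ) b) :=
    fun t ht => ((h2 t ht).continuousAt).continuousWithinAt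
  have key := my_mvt_abs h2 hB
  have hF : ∀ t ∈ Set.uIcc (0:ℝ) b,
      HasDerivAt (fun t => u t - t * du 0) (du t - du 0) t := by
    intro t ht
    exact ((h1 t ht).sub ((hasDerivAt_id t).mul_const (du 0))).congr_deriv (by ring)
  have hint : IntervalIntegrable (fun t => du t - du 0) volume 0 b :=
    (hducont.sub continuousOn_const).intervalIntegrable
  have hFTC := intervalIntegral.integral_eq_sub_of_hasDerivAt hF hint
  have heq : u b - u 0 - b * du 0 = ∫ t in (0:ℝ)..b, (du t - du 0) := by
    rw [hFTC]; ring
  rw [heq]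
  have hcmp := my_int_abs_le (hducont.sub continuousOn_const)
    (continuousOn_const.mul continuous_abs.continuousOn) key
  refine hcmp.trans ?_
  show |∫ t in (0:ℝ)..b, C * abs t| ≤ C * b ^ 2 / 2
  rw [my_integral_mul_abs]
  have : |C * (b * |b|) / 2| = C * b ^ 2 / 2 := by
    rw [abs_div, abs_mul, abs_mul, abs_abs, abs_of_nonneg hC0, abs_mul_abs_self]
    norm_num [sq]
  rw [this]

/-- Second-order Taylor bound from 0. -/
lemma my_taylor2 {u du ddu dddu : ℝ → ℝ} {b C : ℝ}
    (h1 : ∀ t ∈ Set.uIcc (0:ℝ) b, HasDerivAt u (du t) t)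
    (h2 : ∀ t ∈ Set.uIcc (0:ℝ) b, HasDerivAt du (ddu t) t)
    (h3 : ∀ t ∈ Set.uIcc (0:ℝ) b, HasDerivAt ddu (dddu t) t)
    (hB : ∀ t ∈ Set.uIcc (0:ℝ) b, |dddu t| ≤ C) :
    |u b - u 0 - b * du 0 - b ^ 2 / 2 * ddu 0| ≤ C * |b| ^ 3 / 6 := by
  have hC0 : 0 ≤ C := le_trans (abs_nonneg _) (hB 0 Set.left_mem_uIcc)
  have hducont : ContinuousOn du (Set.uIcc (0:ℝ) b) :=
    fun t ht => ((h2 t ht).continuousAt).continuousWithinAt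
  have hsub : ∀ t ∈ Set.uIcc (0:ℝ) b, Set.uIcc (0:ℝ) t ⊆ Set.uIcc (0:ℝ) b :=
    fun t ht => Set.uIcc_subset_uIcc Set.left_mem_uIcc ht
  have key : ∀ t ∈ Set.uIcc (0:ℝ) b, |du t - du 0 - t * ddu 0| ≤ C / 2 * t ^ 2 := by
    intro t ht
    have := my_taylor1 (fun s hs => h2 s (hsub t ht hs)) (fun s hs => h3 s (hsub t ht hs))
      (fun s hs => hB s (hsub t ht hs))
    linarith
  have hF : ∀ t ∈ Set.uIcc (0:ℝ) b,
      HasDerivAt (fun t => u t - t * du 0 - t ^ 2 / 2 * ddu 0) (du t - du 0 - t * ddu 0) t := by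
    intro t ht
    have hp : HasDerivAt (fun t : ℝ => t ^ 2 / 2 * ddu 0) (t * ddu 0) t := by
      have := (((hasDerivAt_pow 2 t)).div_const 2).mul_const (ddu 0)
      refine this.congr_deriv ?_
      push_cast
      ring
    exact (((h1 t ht).sub ((hasDerivAt_id t).mul_const (du 0))).sub hp).congr_deriv (by ring)
  have hint : IntervalIntegrable (fun t => du t - du 0 - t * ddu 0) volume 0 b :=
    ((hducont.sub continuousOn_const).sub
      (continuousOn_id.mul continuousOn_const)).intervalIntegrable
  have hFTC := intervalIntegral.integral_eq_sub_of_hasDerivAt hF hint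
  have heq : u b - u 0 - b * du 0 - b ^ 2 / 2 * ddu 0
      = ∫ t in (0:ℝ)..b, (du t - du 0 - t * ddu 0) := by
    rw [hFTC]; ring
  rw [heq]
  have hcmp := my_int_abs_le
    ((hducont.sub continuousOn_const).sub (continuousOn_id.mul continuousOn_const))
    (continuousOn_const.mul (continuousOn_pow 2)) key
  refine hcmp.trans ?_
  have hw : ∫ t in (0:ℝ)..b, C / 2 * t ^ 2 = C * b ^ 3 / 6 := by
    rw [intervalIntegral.integral_const_mul, integral_pow]
    norm_num; ring
  show |∫ t in (0:ℝ)..b, C / 2 * t ^ 2| ≤ C * |b| ^ 3 / 6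
  rw [hw, abs_div, abs_mul]
  rw [abs_of_nonneg hC0, abs_pow]
  norm_num

/-- Symmetric second-order (midpoint) Taylor bound. -/
lemma my_sym_taylor {u du ddu dddu : ℝ → ℝ} {h C : ℝ} (hh : 0 ≤ h)
    (h1 : ∀ t ∈ Set.Icc (-h) h, HasDerivAt u (du t) t)
    (h2 : ∀ t ∈ Set.Icc (-h) h, HasDerivAt du (ddu t) t)
    (h3 : ∀ t ∈ Set.Icc (-h) h, HasDerivAt ddu (dddu t) t)
    (hB : ∀ t ∈ Set.Icc (-h) h, |dddu t| ≤ C) :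
    |u h - u (-h) - 2 * h * du 0| ≤ C * h ^ 3 / 3 := by
  have hs1 : Set.uIcc (0:ℝ) h ⊆ Set.Icc (-h) h := by
    rw [Set.uIcc_of_le hh]; exact Set.Icc_subset_Icc (by linarith) le_rfl
  have hs2 : Set.uIcc (0:ℝ) (-h) ⊆ Set.Icc (-h) h := by
    rw [Set.uIcc_of_ge (by linarith)]; exact Set.Icc_subset_Icc le_rfl hh
  have t1 := my_taylor2 (fun s hs => h1 s (hs1 hs)) (fun s hs => h2 s (hs1 hs))
    (fun s hs => h3 s (hs1 hs)) (fun s hs => hB s (hs1 hs))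
  have t2 := my_taylor2 (b := -h) (fun s hs => h1 s (hs2 hs)) (fun s hs => h2 s (hs2 hs))
    (fun s hs => h3 s (hs2 hs)) (fun s hs => hB s (hs2 hs))
  rw [abs_of_nonneg hh] at t1
  rw [abs_neg, abs_of_nonneg hh] at t2
  have key : u h - u (-h) - 2 * h * du 0
      = (u h - u 0 - h * du 0 - h ^ 2 / 2 * ddu 0)
        - (u (-h) - u 0 - (-h) * du 0 - (-h) ^ 2 / 2 * ddu 0) := by ring
  rw [key]
  have habs := abs_sub (u h - u 0 - h * du 0 - h ^ 2 / 2 * ddu 0)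
    (u (-h) - u 0 - (-h) * du 0 - (-h) ^ 2 / 2 * ddu 0)
  calc |_ - _| ≤ _ + _ := abs_sub _ _
    _ ≤ C * h ^ 3 / 6 + C * h ^ 3 / 6 := add_le_add t1 t2
    _ = C * h ^ 3 / 3 := by ring

set_option maxHeartbeats 1000000 in
/-- accuracy of the horizontal-edge flux quadrature
for a C³ function on the rectangle K = [−Δx/2, Δx/2] × [−Δy/2, Δy/2]. -/
theorem edge_flux_quadrature
    (Δx Δy : ℝ) (hΔx : 0 < Δx) (hΔy : 0 < Δy)
    (K : Set (ℝ × ℝ))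
    (hK : K = Set.Icc ((-(Δx / 2), -(Δy / 2)) : ℝ × ℝ) ((Δx / 2, Δy / 2) : ℝ × ℝ))
    (f : ℝ × ℝ → ℝ) (U : Set (ℝ × ℝ)) (hU : IsOpen U) (hKU : K ⊆ U)
    (hf : ContDiffOn ℝ 3 f U) (M : ℝ)
    (hM : ∀ x ∈ K, ∀ v w z : ℝ × ℝ,
      (v = ((1 : ℝ), (0 : ℝ)) ∨ v = ((0 : ℝ), (1 : ℝ))) →
      (w = ((1 : ℝ), (0 : ℝ)) ∨ w = ((0 : ℝ), (1 : ℝ))) →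
      (z = ((1 : ℝ), (0 : ℝ)) ∨ z = ((0 : ℝ), (1 : ℝ))) →
      |iteratedFDeriv ℝ 3 f x ![v, w, z]| ≤ M) :
    |(∫ x in (-(Δx / 2))..(Δx / 2), (f (x, Δy / 2) - f (x, -(Δy / 2))))
        - Δx * Δy * fderiv ℝ f ((0 : ℝ), (0 : ℝ)) ((0 : ℝ), (1 : ℝ))|
      ≤ M / 24 * (Δx * Δy ^ 3 + Δx ^ 3 * Δy) := by
  set a := Δx / 2 with ha
  set b := Δy / 2 with hbdef
  set e1 : ℝ × ℝ := ((1 : ℝ), (0 : ℝ)) with he1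
  set e2 : ℝ × ℝ := ((0 : ℝ), (1 : ℝ)) with he2
  have ha0 : 0 < a := by rw [ha]; linarith
  have hb0 : 0 < b := by rw [hbdef]; linarith
  have hmemK : ∀ x y : ℝ, x ∈ Set.Icc (-a) a → y ∈ Set.Icc (-b) b → ((x, y) : ℝ × ℝ) ∈ K := by
    intro x y hx hy
    rw [hK]
    rw [Set.mem_Icc]
    exact ⟨⟨hx.1, hy.1⟩, hx.2, hy.2⟩
  have hmemU : ∀ x y : ℝ, x ∈ Set.Icc (-a) a → y ∈ Set.Icc (-b) b → ((x, y) : ℝ × ℝ) ∈ U :=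
    fun x y hx hy => hKU (hmemK x y hx hy)
  have hmema : (0:ℝ) ∈ Set.Icc (-a) a := ⟨by linarith, by linarith⟩
  have hmemb : (0:ℝ) ∈ Set.Icc (-b) b := ⟨by linarith, by linarith⟩
  have hM0 : 0 ≤ M := le_trans (abs_nonneg _)
    (hM (0, 0) (hmemK 0 0 hmema hmemb) e1 e1 e1 (Or.inl rfl) (Or.inl rfl) (Or.inl rfl))
  set F1 := fderiv ℝ f with hF1def
  set G2 := iteratedFDeriv ℝ 2 f with hG2def
  set G3 := iteratedFDeriv ℝ 3 f with hG3def
  have hfC : ContinuousOn f U := hf.continuousOn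
  have hF1cd : ContDiffOn ℝ 2 F1 U := hf.fderiv_of_isOpen hU (by norm_num)
  have hF1cont : ContinuousOn F1 U := hF1cd.continuousOn
  have hf_at : ∀ p ∈ U, HasFDerivAt f (F1 p) p := fun p hp =>
    (((hf.differentiableOn (by norm_num)) p hp).differentiableAt (hU.mem_nhds hp)).hasFDerivAt
  have hF1_at : ∀ p ∈ U, HasFDerivAt F1 (fderiv ℝ F1 p) p := fun p hp =>
    (((hF1cd.differentiableOn (by norm_num)) p hp).differentiableAt (hU.mem_nhds hp)).hasFDerivAt
  have hG2_at : ∀ p ∈ U, HasFDerivAt G2 (fderiv ℝ G2 p) p := by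
    intro p hp
    have h1 : DifferentiableOn ℝ (iteratedFDerivWithin ℝ 2 f U) U :=
      hf.differentiableOn_iteratedFDerivWithin (by norm_num) hU.uniqueDiffOn
    have h2 : DifferentiableAt ℝ (iteratedFDerivWithin ℝ 2 f U) p :=
      (h1 p hp).differentiableAt (hU.mem_nhds hp)
    have h3 : iteratedFDerivWithin ℝ 2 f U =ᶠ[nhds p] G2 :=
      Filter.eventuallyEq_of_mem (hU.mem_nhds hp) (iteratedFDerivWithin_of_isOpen 2 hU)
    exact (h2.congr_of_eventuallyEq h3.symm).hasFDerivAt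
  have hF1G2 : ∀ (p : ℝ × ℝ) (v w : ℝ × ℝ), fderiv ℝ F1 p v w = G2 p ![v, w] := by
    intro p v w
    rw [hG2def, iteratedFDeriv_two_apply]
    simp [hF1def]
  have hG2G3 : ∀ (p : ℝ × ℝ) (v w z : ℝ × ℝ), fderiv ℝ G2 p v ![w, z] = G3 p ![v, w, z] := by
    intro p v w z
    rw [hG3def]
    have := iteratedFDeriv_succ_apply_left (𝕜 := ℝ) (n := 2) (f := f) (x := p) ![v, w, z]
    rw [this]
    rfl
  -- the vertical slice derivative chain
  have hcurveY : ∀ (x y : ℝ), HasDerivAt (fun s : ℝ => ((x, s) : ℝ × ℝ)) e2 y := by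
    intro x y
    have := (hasDerivAt_const y x).prodMk (hasDerivAt_id y)
    simpa [he2] using this
  have hcurveX : ∀ (x : ℝ), HasDerivAt (fun s : ℝ => ((s, 0) : ℝ × ℝ)) e1 x := by
    intro x
    have := (hasDerivAt_id x).prodMk (hasDerivAt_const x (0:ℝ))
    simpa [he1] using this
  have chainY1 : ∀ (x y : ℝ), ((x, y) : ℝ × ℝ) ∈ U →
      HasDerivAt (fun s => f (x, s)) (F1 (x, y) e2) y := by
    intro x y hp
    exact (hf_at _ hp).comp_hasDerivAt y (hcurveY x y)
  have chainY2 : ∀ (x y : ℝ), ((x, y) : ℝ × ℝ) ∈ U →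
      HasDerivAt (fun s => F1 (x, s) e2) (G2 (x, y) ![e2, e2]) y := by
    intro x y hp
    have h1 : HasDerivAt (fun s => F1 (x, s)) (fderiv ℝ F1 (x, y) e2) y :=
      (hF1_at _ hp).comp_hasDerivAt y (hcurveY x y)
    have h2 := h1.clm_apply (hasDerivAt_const y e2)
    simp only [map_zero, add_zero] at h2
    rwa [hF1G2] at h2
  have chainY3 : ∀ (x y : ℝ), ((x, y) : ℝ × ℝ) ∈ U →
      HasDerivAt (fun s => G2 (x, s) ![e2, e2]) (G3 (x, y) ![e2, e2, e2]) y := by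
    intro x y hp
    have h1 : HasDerivAt (fun s => G2 (x, s)) (fderiv ℝ G2 (x, y) e2) y :=
      (hG2_at _ hp).comp_hasDerivAt y (hcurveY x y)
    have h2 := (ContinuousMultilinearMap.apply ℝ (fun _ : Fin 2 => ℝ × ℝ) ℝ
      ![e2, e2]).hasFDerivAt.comp_hasDerivAt y h1
    simp only [Function.comp_def, ContinuousMultilinearMap.apply_apply] at h2
    rwa [hG2G3] at h2
  have chainX2 : ∀ (x : ℝ), ((x, (0:ℝ)) : ℝ × ℝ) ∈ U →
      HasDerivAt (fun s => F1 (s, 0) e2) (G2 (x, 0) ![e1, e2]) x := by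
    intro x hp
    have h1 : HasDerivAt (fun s => F1 (s, 0)) (fderiv ℝ F1 (x, 0) e1) x :=
      (hF1_at _ hp).comp_hasDerivAt x (hcurveX x)
    have h2 := h1.clm_apply (hasDerivAt_const x e2)
    simp only [map_zero, add_zero] at h2
    rwa [hF1G2] at h2
  have chainX3 : ∀ (x : ℝ), ((x, (0:ℝ)) : ℝ × ℝ) ∈ U →
      HasDerivAt (fun s => G2 (s, 0) ![e1, e2]) (G3 (x, 0) ![e1, e1, e2]) x := by
    intro x hp
    have h1 : HasDerivAt (fun s => G2 (s, 0)) (fderiv ℝ G2 (x, 0) e1) x :=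
      (hG2_at _ hp).comp_hasDerivAt x (hcurveX x)
    have h2 := (ContinuousMultilinearMap.apply ℝ (fun _ : Fin 2 => ℝ × ℝ) ℝ
      ![e1, e2]).hasFDerivAt.comp_hasDerivAt x h1
    simp only [Function.comp_def, ContinuousMultilinearMap.apply_apply] at h2
    rwa [hG2G3] at h2
  -- Step A : symmetric vertical estimate
  have hA : ∀ x ∈ Set.Icc (-a) a,
      |f (x, b) - f (x, -b) - 2 * b * (F1 (x, 0) e2)| ≤ M * b ^ 3 / 3 := by
    intro x hx
    have key := my_sym_taylor (u := fun s => f (x, s)) (du := fun s => F1 (x, s) e2)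
      (ddu := fun s => G2 (x, s) ![e2, e2]) (dddu := fun s => G3 (x, s) ![e2, e2, e2])
      hb0.le
      (fun t ht => chainY1 x t (hmemU x t hx ht))
      (fun t ht => chainY2 x t (hmemU x t hx ht))
      (fun t ht => chainY3 x t (hmemU x t hx ht))
      (fun t ht => hM (x, t) (hmemK x t hx ht) e2 e2 e2 (Or.inr rfl) (Or.inr rfl) (Or.inr rfl))
    exact key
  -- Step B : horizontal Taylor estimate on φ
  have hB : ∀ x ∈ Set.Icc (-a) a,
      |F1 (x, 0) e2 - F1 (0, 0) e2 - x * (G2 (0, 0) ![e1, e2])| ≤ M * x ^ 2 / 2 := by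
    intro x hx
    have hsub : Set.uIcc (0:ℝ) x ⊆ Set.Icc (-a) a := by
      rw [show Set.Icc (-a) a = Set.uIcc (-a) a by rw [Set.uIcc_of_le (by linarith)]]
      exact Set.uIcc_subset_uIcc (by rw [Set.uIcc_of_le (by linarith)]; exact hmema) 
        (by rw [Set.uIcc_of_le (by linarith)]; exact hx)
    have key := my_taylor1 (u := fun s => F1 (s, 0) e2) (du := fun s => G2 (s, 0) ![e1, e2])
      (ddu := fun s => G3 (s, 0) ![e1, e1, e2]) (b := x) (C := M)
      (fun t ht => chainX2 t (hmemU t 0 (hsub ht) hmemb))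
      (fun t ht => chainX3 t (hmemU t 0 (hsub ht) hmemb))
      (fun t ht => hM (t, 0) (hmemK t 0 (hsub ht) hmemb) e1 e1 e2
        (Or.inl rfl) (Or.inl rfl) (Or.inr rfl))
    linarith [key]
  -- continuity facts
  have hIccuIcc : Set.uIcc (-a) a = Set.Icc (-a) a := Set.uIcc_of_le (by linarith)
  have hcont_top : ContinuousOn (fun x : ℝ => f (x, b)) (Set.Icc (-a) a) := by
    apply hfC.comp ((continuous_id.prodMk continuous_const).continuousOn)
    intro x hx
    exact hmemU x b hx ⟨by linarith, le_rfl⟩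
  have hcont_bot : ContinuousOn (fun x : ℝ => f (x, -b)) (Set.Icc (-a) a) := by
    apply hfC.comp ((continuous_id.prodMk continuous_const).continuousOn)
    intro x hx
    exact hmemU x (-b) hx ⟨le_rfl, by linarith⟩
  have hφcont : ContinuousOn (fun x : ℝ => F1 (x, 0) e2) (Set.Icc (-a) a) := by
    have h1 : ContinuousOn (fun x : ℝ => F1 (x, 0)) (Set.Icc (-a) a) := by
      apply hF1cont.comp ((continuous_id.prodMk continuous_const).continuousOn)
      intro x hx
      exact hmemU x 0 hx hmemb
    exact h1.clm_apply continuousOn_const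
  -- integral decomposition
  set c1 := F1 (0, 0) e2 with hc1
  set c2 := G2 (0, 0) ![e1, e2] with hc2
  set A := fun x : ℝ => f (x, b) - f (x, -b) - 2 * b * (F1 (x, 0) e2) with hAdef
  set Bf := fun x : ℝ => F1 (x, 0) e2 - c1 - x * c2 with hBdef
  have hAcont : ContinuousOn A (Set.Icc (-a) a) :=
    (hcont_top.sub hcont_bot).sub (continuousOn_const.mul hφcont)
  have hBcont : ContinuousOn Bf (Set.Icc (-a) a) :=
    (hφcont.sub continuousOn_const).sub (continuousOn_id.mul continuousOn_const)
  have hAint : IntervalIntegrable A volume (-a) a :=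
    (hAcont.mono (by rw [hIccuIcc])).intervalIntegrable
  have hBint : IntervalIntegrable Bf volume (-a) a :=
    (hBcont.mono (by rw [hIccuIcc])).intervalIntegrable
  have hLinint : IntervalIntegrable (fun x : ℝ => 2 * b * c1 + 2 * b * c2 * x) volume (-a) a :=
    (continuous_const.add (continuous_const.mul continuous_id)).intervalIntegrable _ _
  have hsplit : (∫ x in (-a)..a, (f (x, b) - f (x, -b)))
      = (∫ x in (-a)..a, A x) + ((2 * b) * ∫ x in (-a)..a, Bf x) + Δx * Δy * c1 := by
    have heqfun : Set.EqOn (fun x : ℝ => f (x, b) - f (x, -b))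
        (fun x : ℝ => (A x + 2 * b * Bf x) + (2 * b * c1 + 2 * b * c2 * x))
        (Set.uIcc (-a) a) := by
      intro x _
      simp only [hAdef, hBdef]
      ring
    rw [intervalIntegral.integral_congr heqfun]
    rw [intervalIntegral.integral_add (hAint.add (hBint.const_mul _)) hLinint]
    rw [intervalIntegral.integral_add hAint (hBint.const_mul _)]
    rw [intervalIntegral.integral_const_mul]
    have hint2 : IntervalIntegrable (fun x : ℝ => 2 * b * c2 * x) volume (-a) a :=
      Continuous.intervalIntegrable (by fun_prop) _ _
    have hlin : (∫ x in (-a)..a, (2 * b * c1 + 2 * b * c2 * x)) = Δx * Δy * c1 := by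
      rw [intervalIntegral.integral_add intervalIntegrable_const hint2,
        intervalIntegral.integral_const, intervalIntegral.integral_const_mul, integral_id,
        smul_eq_mul]
      have eΔx : Δx = 2 * a := by rw [ha]; ring
      have eΔy : Δy = 2 * b := by rw [hbdef]; ring
      rw [eΔx, eΔy]
      ring
    rw [hlin]
  -- bounds on the two integrals
  have hAbound : |∫ x in (-a)..a, A x| ≤ M * b ^ 3 / 3 * (2 * a) := by
    have := intervalIntegral.norm_integral_le_of_norm_le_const (C := M * b ^ 3 / 3)
      (f := A) (a := -a) (b := a) ?_
    · rw [Real.norm_eq_abs] at this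
      refine this.trans ?_
      have : |a - -a| = 2 * a := by rw [abs_of_nonneg (by linarith)]; ring
      rw [this]
    · intro x hx
      have hx' : x ∈ Set.Icc (-a) a := by
        have : Set.uIoc (-a) a = Set.Ioc (-a) a := Set.uIoc_of_le (by linarith)
        rw [this] at hx
        exact ⟨hx.1.le, hx.2⟩
      rw [Real.norm_eq_abs]
      exact hA x hx'
  have hBbound : |∫ x in (-a)..a, Bf x| ≤ M * a ^ 3 / 3 := by
    have h1 : |∫ x in (-a)..a, Bf x| ≤ ∫ x in (-a)..a, |Bf x| := by
      simpa [Real.norm_eq_abs] using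
        intervalIntegral.norm_integral_le_integral_norm (f := Bf) (a := -a) (b := a)
          (by linarith)
    have h2 : ∫ x in (-a)..a, |Bf x| ≤ ∫ x in (-a)..a, M * x ^ 2 / 2 := by
      apply intervalIntegral.integral_mono_on (by linarith)
      · exact ((hBcont.mono (by rw [hIccuIcc])).abs).intervalIntegrable
      · exact (((continuous_const.mul (continuous_pow 2)).div_const 2).intervalIntegrable _ _)
      · exact hB
    have h3 : ∫ x in (-a)..a, M * x ^ 2 / 2 = M * a ^ 3 / 3 := by
      rw [show (fun x : ℝ => M * x ^ 2 / 2) = (fun x : ℝ => (M / 2) * x ^ 2) by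
        funext x; ring]
      rw [intervalIntegral.integral_const_mul, integral_pow]
      ring
    linarith
  -- final assembly
  have hgoal : (∫ x in (-a)..a, (f (x, b) - f (x, -b))) - Δx * Δy * c1
      = (∫ x in (-a)..a, A x) + (2 * b) * (∫ x in (-a)..a, Bf x) := by
    rw [hsplit]; ring
  rw [hgoal]
  have htri : |(∫ x in (-a)..a, A x) + (2 * b) * (∫ x in (-a)..a, Bf x)|
      ≤ |∫ x in (-a)..a, A x| + (2 * b) * |∫ x in (-a)..a, Bf x| := by
    refine (abs_add_le _ _).trans ?_
    rw [abs_mul, abs_of_nonneg (by linarith : (0:ℝ) ≤ 2 * b)]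
  have hfin : |∫ x in (-a)..a, A x| + (2 * b) * |∫ x in (-a)..a, Bf x|
      ≤ M / 24 * (Δx * Δy ^ 3 + Δx ^ 3 * Δy) := by
    have eΔx : Δx = 2 * a := by rw [ha]; ring
    have eΔy : Δy = 2 * b := by rw [hbdef]; ring
    have h2 : (2 * b) * |∫ x in (-a)..a, Bf x| ≤ (2 * b) * (M * a ^ 3 / 3) :=
      mul_le_mul_of_nonneg_left hBbound (by linarith)
    rw [eΔx, eΔy]
    have hring : M / 24 * (2 * a * (2 * b) ^ 3 + (2 * a) ^ 3 * (2 * b))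
        = M * b ^ 3 / 3 * (2 * a) + 2 * b * (M * a ^ 3 / 3) := by ring
    rw [hring]
    exact add_le_add hAbound h2
  exact htri.trans hfin
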